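/- Let n, m ≥ 2, let G = ZMod n × ZMod m, and let Θ, Θ̃ : G → ℝ be real signals such that F(Θ)_κ ≠ 0 for every κ ∈ G. Let S be the following set of pairs of indices: ((0,0),(0,0)); ((0,0),(1,0)); ((1,0),(k,0)) for 1 ≤ k ≤ n−2; ((0,0),(0,1)); ((0,1),(0,s)) for 1 ≤ s ≤ m−2; and ((0,t),(k,0)) for 1 ≤ t ≤ m−1 and 1 ≤ k ≤ n−1 (a total of n·m pairs). If β(Θ̃)_{κ,κ'} = β(Θ)_{κ,κ'} for every (κ,κ') ∈ S, then there exists (h,h') ∈ G such that Θ̃(g,g') = Θ(g+h, g'+h') for all (g,g') ∈ G. (Selective-bispectrum inversion on a product of two cyclic groups using only |G| = nm coefficients.) -/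

import Mathlib

open Finset

/-- The character of `ZMod n × ZMod m` indexed by `κ = (j, s)`:
`χ_κ(g, g') = exp(2πi·(j̄·ḡ/n + s̄·ḡ'/m))`. -/
noncomputable def prodChar (n m : ℕ) [NeZero n] [NeZero m]
    (κ u : ZMod n × ZMod m) : ℂ :=
  Complex.exp (2 * (Real.pi : ℂ) * Complex.I *
    ((κ.1.val * u.1.val : ℕ) / (n : ℂ) + (κ.2.val * u.2.val : ℕ) / (m : ℂ)))

/-- The Fourier transform on `ZMod n × ZMod m`:
`F(Θ)_κ = Σ_{u} Θ(u) · conj(χ_κ(u))`. -/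
noncomputable def prodDFT (n m : ℕ) [NeZero n] [NeZero m]
    (Θ : ZMod n × ZMod m → ℂ) (κ : ZMod n × ZMod m) : ℂ :=
  ∑ u : ZMod n × ZMod m, Θ u * (starRingEnd ℂ) (prodChar n m κ u)

/-- The bispectrum on `ZMod n × ZMod m`:
`β(Θ)_{κ,κ'} = F(Θ)_κ · F(Θ)_{κ'} · conj(F(Θ)_{κ+κ'})`. -/
noncomputable def prodBispectrum (n m : ℕ) [NeZero n] [NeZero m]
    (Θ : ZMod n × ZMod m → ℂ) (κ κ' : ZMod n × ZMod m) : ℂ :=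
  prodDFT n m Θ κ * prodDFT n m Θ κ' * (starRingEnd ℂ) (prodDFT n m Θ (κ + κ'))

noncomputable def eZ (n : ℕ) [NeZero n] (a : ZMod n) : ℂ :=
  Complex.exp (2 * (Real.pi : ℂ) * Complex.I * ((a.val : ℂ) / n))

lemma eZ_natCast (n : ℕ) [NeZero n] (a : ℕ) :
    eZ n (a : ZMod n) = Complex.exp (2 * (Real.pi : ℂ) * Complex.I * ((a : ℂ) / n)) := by
  have hn : (n : ℂ) ≠ 0 := Nat.cast_ne_zero.2 (NeZero.ne n)
  have hv : ((a : ZMod n)).val = a % n := ZMod.val_natCast n a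
  have ha : a = a % n + n * (a / n) := (Nat.mod_add_div a n).symm
  rw [eZ, hv]
  conv_rhs => rw [ha]
  push_cast
  rw [add_div, mul_add, Complex.exp_add]
  have : (n : ℂ) * (a / n : ℕ) / n = ((a / n : ℕ) : ℂ) := by
    field_simp
  rw [this]
  have : Complex.exp (2 * (Real.pi : ℂ) * Complex.I * ((a / n : ℕ) : ℂ)) = 1 := by
    have := Complex.exp_int_mul_two_pi_mul_I ((a / n : ℕ) : ℤ)
    rw [← this]
    congr 1
    norm_cast
    ring
  rw [this, mul_one]

lemma eZ_zero (n : ℕ) [NeZero n] : eZ n 0 = 1 := by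
  simp [eZ]

lemma eZ_add (n : ℕ) [NeZero n] (a b : ZMod n) : eZ n (a + b) = eZ n a * eZ n b := by
  have h1 : a = ((a.val : ℕ) : ZMod n) := by simp [ZMod.natCast_val, ZMod.cast_id]
  have h2 : b = ((b.val : ℕ) : ZMod n) := by simp [ZMod.natCast_val, ZMod.cast_id]
  rw [h1, h2, ← Nat.cast_add, eZ_natCast, eZ_natCast, eZ_natCast, ← Complex.exp_add]
  congr 1
  push_cast
  ring

lemma eZ_ne_zero (n : ℕ) [NeZero n] (a : ZMod n) : eZ n a ≠ 0 := Complex.exp_ne_zero _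

lemma eZ_pow (n : ℕ) [NeZero n] (k : ℕ) (w : ZMod n) :
    eZ n ((k : ZMod n) * w) = (eZ n w) ^ k := by
  induction k with
  | zero => simp [eZ_zero]
  | succ k ih =>
    have : ((k + 1 : ℕ) : ZMod n) * w = (k : ZMod n) * w + w := by push_cast; ring
    rw [this, eZ_add, ih, pow_succ]

lemma eZ_conj (n : ℕ) [NeZero n] (a : ZMod n) :
    (starRingEnd ℂ) (eZ n a) = eZ n (-a) := by
  have h1 : (starRingEnd ℂ) (eZ n a) * eZ n a = 1 := by
    rw [eZ, ← Complex.exp_conj, ← Complex.exp_add]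
    have : (starRingEnd ℂ) (2 * (Real.pi : ℂ) * Complex.I * ((a.val : ℂ) / n))
        = -(2 * (Real.pi : ℂ) * Complex.I * ((a.val : ℂ) / n)) := by
      simp only [map_mul, map_div₀, Complex.conj_I, Complex.conj_natCast, map_ofNat,
        Complex.conj_ofReal]
      ring
    rw [this, neg_add_cancel, Complex.exp_zero]
  have h2 : eZ n (-a) * eZ n a = 1 := by
    rw [← eZ_add, neg_add_cancel, eZ_zero]
  exact mul_right_cancel₀ (eZ_ne_zero n a) (h1.trans h2.symm)

lemma eZ_ne_one (n : ℕ) [NeZero n] (w : ZMod n) (hw : w ≠ 0) : eZ n w ≠ 1 := by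
  intro h
  rw [eZ, Complex.exp_eq_one_iff] at h
  obtain ⟨k, hk⟩ := h
  have hn : (n : ℂ) ≠ 0 := Nat.cast_ne_zero.2 (NeZero.ne n)
  have h2 : (2 * (Real.pi : ℂ) * Complex.I) ≠ 0 := by
    simp [Real.pi_ne_zero, Complex.I_ne_zero]
  have h3 : ((w.val : ℂ)) / n = k := by
    apply mul_left_cancel₀ h2
    rw [hk]; ring
  have hv : (w.val : ℂ) = k * n := by
    rw [div_eq_iff hn] at h3; exact h3
  have hz : (w.val : ℤ) = k * n := by exact_mod_cast hv
  have hlt : w.val < n := ZMod.val_lt w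
  have hne : w.val ≠ 0 := fun h0 => hw ((ZMod.val_eq_zero w).1 h0)
  have hn0 : (0:ℤ) < n := by exact_mod_cast Nat.pos_of_ne_zero (NeZero.ne n)
  rcases le_or_gt k 0 with hk0 | hk0
  · have : k * (n:ℤ) ≤ 0 := mul_nonpos_of_nonpos_of_nonneg hk0 hn0.le
    omega
  · have : (n:ℤ) ≤ k * n := le_mul_of_one_le_left hn0.le hk0
    omega

lemma sum_eZ (n : ℕ) [NeZero n] (w : ZMod n) :
    ∑ j : ZMod n, eZ n (j * w) = if w = 0 then (n : ℂ) else 0 := by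
  have key : ∀ j : ZMod n, eZ n (j * w) = (eZ n w) ^ j.val := by
    intro j
    rw [← eZ_pow]
    congr 1
    simp [ZMod.natCast_val, ZMod.cast_id]
  simp_rw [key]
  have hbij : ∑ j : ZMod n, (eZ n w) ^ j.val = ∑ i ∈ Finset.range n, (eZ n w) ^ i := by
    apply Finset.sum_nbij' (i := fun (j : ZMod n) => j.val) (j := fun (i : ℕ) => (i : ZMod n))
    · intro j _; exact Finset.mem_range.2 (ZMod.val_lt j)
    · intro i _; exact Finset.mem_univ _
    · intro j _; simp [ZMod.natCast_val, ZMod.cast_id]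
    · intro i hi; exact ZMod.val_natCast_of_lt (Finset.mem_range.1 hi)
    · intro j _; rfl
  rw [hbij]
  split_ifs with h
  · subst h
    simp [eZ_zero]
  · have h1 : eZ n w ≠ 1 := eZ_ne_one n w h
    rw [geom_sum_eq h1]
    have : (eZ n w) ^ n = 1 := by
      rw [← eZ_pow]
      simp [ZMod.natCast_self, eZ_zero]
    rw [this, sub_self, zero_div]

section Helpers
variable {n m : ℕ} [NeZero n] [NeZero m]


lemma prodChar_eq (κ u : ZMod n × ZMod m) :
    prodChar n m κ u = eZ n (κ.1 * u.1) * eZ m (κ.2 * u.2) := by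
  have h1 : κ.1 * u.1 = ((κ.1.val * u.1.val : ℕ) : ZMod n) := by
    push_cast
    simp [ZMod.natCast_val, ZMod.cast_id]
  have h2 : κ.2 * u.2 = ((κ.2.val * u.2.val : ℕ) : ZMod m) := by
    push_cast
    simp [ZMod.natCast_val, ZMod.cast_id]
  rw [prodChar, h1, h2, eZ_natCast, eZ_natCast, ← Complex.exp_add]
  congr 1
  push_cast
  ring

lemma prodChar_add_right (κ u v : ZMod n × ZMod m) :
    prodChar n m κ (u + v) = prodChar n m κ u * prodChar n m κ v := by
  simp only [prodChar_eq, Prod.fst_add, Prod.snd_add, mul_add, eZ_add]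
  ring

lemma prodChar_conj (κ u : ZMod n × ZMod m) :
    (starRingEnd ℂ) (prodChar n m κ u) = prodChar n m κ (-u) := by
  simp only [prodChar_eq, map_mul, eZ_conj, Prod.fst_neg, Prod.snd_neg, mul_neg]

lemma prodChar_ne_zero (κ u : ZMod n × ZMod m) : prodChar n m κ u ≠ 0 :=
  Complex.exp_ne_zero _

lemma sum_prodChar (w : ZMod n × ZMod m) :
    ∑ κ : ZMod n × ZMod m, prodChar n m κ w = if w = 0 then ((n * m : ℕ) : ℂ) else 0 := by
  rw [Fintype.sum_prod_type]
  simp only [prodChar_eq]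
  rw [← Finset.sum_mul_sum]
  rw [sum_eZ, sum_eZ]
  by_cases h1 : w.1 = 0 <;> by_cases h2 : w.2 = 0 <;>
    simp [Prod.ext_iff, h1, h2, Prod.fst_zero, Prod.snd_zero]

lemma prodDFT_inversion (Θc : ZMod n × ZMod m → ℂ) (g : ZMod n × ZMod m) :
    ∑ κ : ZMod n × ZMod m, prodDFT n m Θc κ * prodChar n m κ g
      = ((n * m : ℕ) : ℂ) * Θc g := by
  simp only [prodDFT, Finset.sum_mul]
  rw [Finset.sum_comm]
  have hterm : ∀ u κ, Θc u * (starRingEnd ℂ) (prodChar n m κ u) * prodChar n m κ g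
      = Θc u * prodChar n m κ (g - u) := by
    intro u κ
    rw [prodChar_conj, mul_assoc, ← prodChar_add_right]
    congr 2
    abel
  simp only [hterm]
  have hsum : ∀ u : ZMod n × ZMod m,
      ∑ κ : ZMod n × ZMod m, Θc u * prodChar n m κ (g - u)
        = Θc u * (if g - u = 0 then ((n * m : ℕ) : ℂ) else 0) := by
    intro u
    rw [← Finset.mul_sum, sum_prodChar]
  simp only [hsum]
  rw [Finset.sum_eq_single g]
  · simp [mul_comm]
  · intro b _ hb
    simp [sub_eq_zero, Ne.symm hb]
  · intro hg
    exact absurd (Finset.mem_univ g) hg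

lemma prodChar_neg_neg (κ u : ZMod n × ZMod m) :
    prodChar n m (-κ) (-u) = prodChar n m κ u := by
  simp only [prodChar_eq, Prod.fst_neg, Prod.snd_neg, neg_mul_neg]

lemma prodDFT_real_conj (Θ : ZMod n × ZMod m → ℝ) (κ : ZMod n × ZMod m) :
    (starRingEnd ℂ) (prodDFT n m (fun u => (Θ u : ℂ)) κ)
      = prodDFT n m (fun u => (Θ u : ℂ)) (-κ) := by
  rw [prodDFT, map_sum, prodDFT]
  refine Finset.sum_congr rfl fun u _ => ?_
  rw [map_mul, Complex.conj_conj, Complex.conj_ofReal, prodChar_conj, prodChar_neg_neg]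

end Helpers

/-- Selective-bispectrum inversion on a product of two cyclic groups using only
`|G| = n·m` bispectral coefficients: equality of the selected coefficients determines
a real signal with nonvanishing Fourier transform up to translation. -/
theorem selective_bispectrum_inversion_prod (n m : ℕ) [NeZero n] [NeZero m]
    (hn : 2 ≤ n) (hm : 2 ≤ m)
    (Θ Θ' : ZMod n × ZMod m → ℝ)
    (hF : ∀ κ : ZMod n × ZMod m, prodDFT n m (fun u => (Θ u : ℂ)) κ ≠ 0)
    (h00 : prodBispectrum n m (fun u => (Θ' u : ℂ)) (0, 0) (0, 0)
         = prodBispectrum n m (fun u => (Θ u : ℂ)) (0, 0) (0, 0))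
    (h010 : prodBispectrum n m (fun u => (Θ' u : ℂ)) (0, 0) (1, 0)
          = prodBispectrum n m (fun u => (Θ u : ℂ)) (0, 0) (1, 0))
    (h1k : ∀ k : ℕ, 1 ≤ k → k ≤ n - 2 →
      prodBispectrum n m (fun u => (Θ' u : ℂ)) (1, 0) ((k : ZMod n), 0)
        = prodBispectrum n m (fun u => (Θ u : ℂ)) (1, 0) ((k : ZMod n), 0))
    (h001 : prodBispectrum n m (fun u => (Θ' u : ℂ)) (0, 0) (0, 1)
          = prodBispectrum n m (fun u => (Θ u : ℂ)) (0, 0) (0, 1))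
    (h0s : ∀ s : ℕ, 1 ≤ s → s ≤ m - 2 →
      prodBispectrum n m (fun u => (Θ' u : ℂ)) (0, 1) (0, (s : ZMod m))
        = prodBispectrum n m (fun u => (Θ u : ℂ)) (0, 1) (0, (s : ZMod m)))
    (htk : ∀ t k : ℕ, 1 ≤ t → t ≤ m - 1 → 1 ≤ k → k ≤ n - 1 →
      prodBispectrum n m (fun u => (Θ' u : ℂ)) (0, (t : ZMod m)) ((k : ZMod n), 0)
        = prodBispectrum n m (fun u => (Θ u : ℂ)) (0, (t : ZMod m)) ((k : ZMod n), 0)) :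
    ∃ h : ZMod n, ∃ h' : ZMod m,
      ∀ (g : ZMod n) (g' : ZMod m), Θ' (g, g') = Θ (g + h, g' + h') := by
  classical
  simp only [prodBispectrum] at h00 h010 h1k h001 h0s htk
  set F : ZMod n × ZMod m → ℂ := prodDFT n m (fun u => (Θ u : ℂ)) with hFdef
  set F' : ZMod n × ZMod m → ℂ := prodDFT n m (fun u => (Θ' u : ℂ)) with hF'def
  have hconj : ∀ κ, (starRingEnd ℂ) (F κ) = F (-κ) := fun κ => prodDFT_real_conj Θ κ
  have hconj' : ∀ κ, (starRingEnd ℂ) (F' κ) = F' (-κ) := fun κ => prodDFT_real_conj Θ' κ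
  -- Step A : F' (0,0) = F (0,0)
  have hzero : (((0:ZMod n), (0:ZMod m)) : ZMod n × ZMod m) + (0, 0) = (0, 0) := by simp
  rw [hzero] at h00
  have hc0 : (starRingEnd ℂ) (F (0, 0)) = F (0, 0) := by
    have := hconj (0, 0); simpa using this
  have hc0' : (starRingEnd ℂ) (F' (0, 0)) = F' (0, 0) := by
    have := hconj' (0, 0); simpa using this
  have hA : F' (0, 0) = F (0, 0) := by
    have hr0 : ((F (0, 0)).re : ℂ) = F (0, 0) := Complex.conj_eq_iff_re.1 hc0
    have hr0' : ((F' (0, 0)).re : ℂ) = F' (0, 0) := Complex.conj_eq_iff_re.1 hc0'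
    rw [hc0, hc0'] at h00
    rw [← hr0, ← hr0'] at h00 ⊢
    norm_cast at h00 ⊢
    have h3 : (F' (0, 0)).re ^ 3 = (F (0, 0)).re ^ 3 := by linear_combination h00
    exact (Odd.strictMono_pow (R := ℝ) (⟨1, rfl⟩ : Odd 3)).injective h3
  -- Step B : units z₁ z₂
  have hone : (((0:ZMod n), (0:ZMod m)) : ZMod n × ZMod m) + (1, 0) = (1, 0) := by simp
  rw [hone, hA] at h010
  have hB1 : F' (1, 0) * (starRingEnd ℂ) (F' (1, 0)) = F (1, 0) * (starRingEnd ℂ) (F (1, 0)) := by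
    apply mul_left_cancel₀ (hF (0, 0))
    linear_combination h010
  have hcne : ∀ κ, (starRingEnd ℂ) (F κ) ≠ 0 := by
    intro κ h
    exact hF (-κ) (by rw [← hconj κ, h])
  have hF'10 : F' (1, 0) ≠ 0 := by
    intro h
    apply mul_ne_zero (hF (1, 0)) (hcne (1, 0))
    rw [← hB1, h, zero_mul]
  set z₁ : ℂ := F' (1, 0) / F (1, 0) with hz1def
  have hz1 : F' (1, 0) = z₁ * F (1, 0) := by
    rw [hz1def, div_mul_cancel₀ _ (hF (1, 0))]
  have hz1u : z₁ * (starRingEnd ℂ) z₁ = 1 := by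
    rw [hz1def, map_div₀]
    rw [div_mul_div_comm, hB1, div_self (mul_ne_zero (hF (1, 0)) (hcne (1, 0)))]
  -- same for second coordinate
  have hone2 : (((0:ZMod n), (0:ZMod m)) : ZMod n × ZMod m) + (0, 1) = (0, 1) := by simp
  rw [hone2, hA] at h001
  have hB2 : F' (0, 1) * (starRingEnd ℂ) (F' (0, 1)) = F (0, 1) * (starRingEnd ℂ) (F (0, 1)) := by
    apply mul_left_cancel₀ (hF (0, 0))
    linear_combination h001
  have hF'01 : F' (0, 1) ≠ 0 := by
    intro h
    apply mul_ne_zero (hF (0, 1)) (hcne (0, 1))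
    rw [← hB2, h, zero_mul]
  set z₂ : ℂ := F' (0, 1) / F (0, 1) with hz2def
  have hz2 : F' (0, 1) = z₂ * F (0, 1) := by
    rw [hz2def, div_mul_cancel₀ _ (hF (0, 1))]
  have hz2u : z₂ * (starRingEnd ℂ) z₂ = 1 := by
    rw [hz2def, map_div₀]
    rw [div_mul_div_comm, hB2, div_self (mul_ne_zero (hF (0, 1)) (hcne (0, 1)))]
  -- the cancellation helper
  have unit_step : ∀ (z c w w' : ℂ), z * (starRingEnd ℂ) z = 1 → c ≠ 0 →
      c * (z * (starRingEnd ℂ) w') = c * (starRingEnd ℂ) w → w' = z * w := by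
    intro z c w w' hz hc h
    have h1 : z * (starRingEnd ℂ) w' = (starRingEnd ℂ) w := mul_left_cancel₀ hc h
    have h2 := congrArg (starRingEnd ℂ) h1
    rw [map_mul, Complex.conj_conj, Complex.conj_conj] at h2
    calc w' = (z * (starRingEnd ℂ) z) * w' := by rw [hz, one_mul]
      _ = z * ((starRingEnd ℂ) z * w') := by ring
      _ = z * w := by rw [h2]
  -- Step C : key1
  have key1 : ∀ k : ℕ, k ≤ n - 1 → F' ((k : ZMod n), 0) = z₁ ^ k * F ((k : ZMod n), 0) := by
    intro k
    induction k with
    | zero => intro _; simpa using hA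
    | succ k ih =>
      intro hk
      rcases Nat.eq_zero_or_pos k with rfl | hkpos
      · simpa using hz1
      · have h := h1k k hkpos (by omega)
        have hadd : (((1:ZMod n), (0:ZMod m)) : ZMod n × ZMod m) + ((k : ZMod n), 0)
            = (((k+1 : ℕ) : ZMod n), 0) := by
          simp only [Prod.mk_add_mk, add_zero, Prod.mk.injEq]
          exact ⟨by push_cast; ring, trivial⟩
        rw [hadd, hz1, ih (by omega)] at h
        refine unit_step (z₁ ^ (k+1)) (F (1, 0) * F ((k : ZMod n), 0)) _ _ ?_
          (mul_ne_zero (hF _) (hF _)) ?_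
        · rw [map_pow, ← mul_pow, hz1u, one_pow]
        · rw [pow_succ]; linear_combination h
  have key2 : ∀ s : ℕ, s ≤ m - 1 → F' (0, (s : ZMod m)) = z₂ ^ s * F (0, (s : ZMod m)) := by
    intro s
    induction s with
    | zero => intro _; simpa using hA
    | succ s ih =>
      intro hs
      rcases Nat.eq_zero_or_pos s with rfl | hspos
      · simpa using hz2
      · have h := h0s s hspos (by omega)
        have hadd : (((0:ZMod n), (1:ZMod m)) : ZMod n × ZMod m) + (0, (s : ZMod m))
            = (0, ((s+1 : ℕ) : ZMod m)) := by
          simp only [Prod.mk_add_mk, add_zero, Prod.mk.injEq]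
          exact ⟨trivial, by push_cast; ring⟩
        rw [hadd, hz2, ih (by omega)] at h
        refine unit_step (z₂ ^ (s+1)) (F (0, 1) * F (0, (s : ZMod m))) _ _ ?_
          (mul_ne_zero (hF _) (hF _)) ?_
        · rw [map_pow, ← mul_pow, hz2u, one_pow]
        · rw [pow_succ]; linear_combination h
  -- Step D : key3
  have key3 : ∀ t k : ℕ, 1 ≤ t → t ≤ m - 1 → 1 ≤ k → k ≤ n - 1 →
      F' ((k : ZMod n), (t : ZMod m)) = z₁ ^ k * z₂ ^ t * F ((k : ZMod n), (t : ZMod m)) := by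
    intro t k ht1 ht2 hk1 hk2
    have h := htk t k ht1 ht2 hk1 hk2
    have hadd : (((0:ZMod n), (t : ZMod m)) : ZMod n × ZMod m) + ((k : ZMod n), 0)
        = ((k : ZMod n), (t : ZMod m)) := by
      simp
    rw [hadd, key2 t ht2, key1 k hk2] at h
    refine unit_step (z₁ ^ k * z₂ ^ t) (F (0, (t : ZMod m)) * F ((k : ZMod n), 0)) _ _ ?_
      (mul_ne_zero (hF _) (hF _)) ?_
    · rw [map_mul, map_pow, map_pow, mul_mul_mul_comm, ← mul_pow, ← mul_pow,
        hz1u, hz2u, one_pow, one_pow, one_mul]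
    · linear_combination h
  -- Step E : roots of unity
  have hz1n : z₁ ^ n = 1 := by
    have e1 := key1 (n - 1) le_rfl
    have hcast : ((n - 1 : ℕ) : ZMod n) = -1 := by
      rw [Nat.cast_sub (by omega : 1 ≤ n), Nat.cast_one, ZMod.natCast_self, zero_sub]
    have hneg : ((((n-1:ℕ) : ZMod n), (0:ZMod m)) : ZMod n × ZMod m) = -(1, 0) := by
      rw [hcast]; simp [Prod.ext_iff]
    rw [hneg] at e1
    have e2 : F' (-(1, 0)) = (starRingEnd ℂ) z₁ * F (-(1, 0)) := by
      rw [← hconj' (1, 0), hz1, map_mul, hconj (1, 0)]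
    have e3 : z₁ ^ (n - 1) = (starRingEnd ℂ) z₁ :=
      mul_right_cancel₀ (hF (-(1, 0))) (e1.symm.trans e2)
    have e4 : z₁ ^ n = z₁ ^ (n - 1) * z₁ := by
      rw [← pow_succ]; congr 1; omega
    rw [e4, e3, mul_comm]
    exact hz1u
  have hz2m : z₂ ^ m = 1 := by
    have e1 := key2 (m - 1) le_rfl
    have hcast : ((m - 1 : ℕ) : ZMod m) = -1 := by
      rw [Nat.cast_sub (by omega : 1 ≤ m), Nat.cast_one, ZMod.natCast_self, zero_sub]
    have hneg : (((0:ZMod n), ((m-1:ℕ) : ZMod m)) : ZMod n × ZMod m) = -(0, 1) := by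
      rw [hcast]; simp [Prod.ext_iff]
    rw [hneg] at e1
    have e2 : F' (-(0, 1)) = (starRingEnd ℂ) z₂ * F (-(0, 1)) := by
      rw [← hconj' (0, 1), hz2, map_mul, hconj (0, 1)]
    have e3 : z₂ ^ (m - 1) = (starRingEnd ℂ) z₂ :=
      mul_right_cancel₀ (hF (-(0, 1))) (e1.symm.trans e2)
    have e4 : z₂ ^ m = z₂ ^ (m - 1) * z₂ := by
      rw [← pow_succ]; congr 1; omega
    rw [e4, e3, mul_comm]
    exact hz2u
  obtain ⟨i, hi, hie⟩ := (Complex.isPrimitiveRoot_exp n (NeZero.ne n)).eq_pow_of_pow_eq_one hz1n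
  obtain ⟨i', hi', hie'⟩ := (Complex.isPrimitiveRoot_exp m (NeZero.ne m)).eq_pow_of_pow_eq_one hz2m
  have hz1e : z₁ = eZ n ((i : ZMod n)) := by
    rw [← hie, eZ_natCast, ← Complex.exp_nat_mul]
    congr 1
    ring
  have hz2e : z₂ = eZ m ((i' : ZMod m)) := by
    rw [← hie', eZ_natCast, ← Complex.exp_nat_mul]
    congr 1
    ring
  -- all frequencies
  have keyAll : ∀ κ : ZMod n × ZMod m, F' κ = z₁ ^ κ.1.val * z₂ ^ κ.2.val * F κ := by
    rintro ⟨a, b⟩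
    by_cases hb : b = 0
    · subst hb
      have := key1 a.val (by have := ZMod.val_lt a; omega)
      simpa [ZMod.natCast_val, ZMod.cast_id] using this
    · have hbv : 1 ≤ b.val := Nat.one_le_iff_ne_zero.2 (fun h => hb ((ZMod.val_eq_zero b).1 h))
      have hbv2 : b.val ≤ m - 1 := by have := ZMod.val_lt b; omega
      by_cases ha : a = 0
      · subst ha
        have := key2 b.val hbv2
        simpa [ZMod.natCast_val, ZMod.cast_id] using this
      · have hav : 1 ≤ a.val := Nat.one_le_iff_ne_zero.2 (fun h => ha ((ZMod.val_eq_zero a).1 h))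
        have hav2 : a.val ≤ n - 1 := by have := ZMod.val_lt a; omega
        have := key3 b.val a.val hbv hbv2 hav hav2
        simpa [ZMod.natCast_val, ZMod.cast_id] using this
  have hchar : ∀ κ : ZMod n × ZMod m,
      prodChar n m κ ((i : ZMod n), (i' : ZMod m)) = z₁ ^ κ.1.val * z₂ ^ κ.2.val := by
    intro κ
    rw [prodChar_eq, hz1e, hz2e, ← eZ_pow, ← eZ_pow]
    congr 2 <;> simp [ZMod.natCast_val, ZMod.cast_id]
  refine ⟨(i : ZMod n), (i' : ZMod m), ?_⟩
  intro g g'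
  have hterm : ∀ κ : ZMod n × ZMod m,
      F' κ * prodChar n m κ (g, g')
        = F κ * prodChar n m κ ((g, g') + ((i : ZMod n), (i' : ZMod m))) := by
    intro κ
    rw [prodChar_add_right, keyAll κ, ← hchar κ]
    ring
  have hinv1 := prodDFT_inversion (n := n) (m := m) (fun u => (Θ' u : ℂ)) (g, g')
  have hinv2 := prodDFT_inversion (n := n) (m := m) (fun u => (Θ u : ℂ))
    ((g, g') + ((i : ZMod n), (i' : ZMod m)))
  have hmain : ((n * m : ℕ) : ℂ) * (Θ' (g, g') : ℂ)
      = ((n * m : ℕ) : ℂ) * (Θ ((g, g') + ((i : ZMod n), (i' : ZMod m))) : ℂ) := by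
    rw [← hinv1, ← hinv2]
    exact Finset.sum_congr rfl (fun κ _ => hterm κ)
  have hnm : ((n * m : ℕ) : ℂ) ≠ 0 := by
    simp [NeZero.ne n, NeZero.ne m]
  have := mul_left_cancel₀ hnm hmain
  have hpt : ((g, g') + ((i : ZMod n), (i' : ZMod m)) : ZMod n × ZMod m)
      = (g + (i : ZMod n), g' + (i' : ZMod m)) := rfl
  rw [hpt] at this
  exact_mod_cast this
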